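/- Let (X,d) be a metric space and let A and B be two nonempty subsets of X such that the pair (A,B) satisfies property WUC. Assume that A is complete. Let T be a cyclic contraction on A∪B. Then T has a unique best proximity point z in A, and the sequence {T^{2n}x} converges to z for every x ∈ A. -/

import Mathlib

open Filter Metric

/-- The distance between two sets: `inf {d(x,y) : x ∈ A, y ∈ B}`. -/
noncomputable def setDist {X : Type*} [PseudoMetricSpace X] (A B : Set X) : ℝ :=
  sInf (Set.image2 dist A B)

/-- Property WUC for a pair of subsets of a metric space. -/
def PropWUC {X : Type*} [MetricSpace X] (A B : Set X) : Prop :=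
  ∀ x : ℕ → X, (∀ n, x n ∈ A) →
    (∀ ε > (0 : ℝ), ∃ y ∈ B, ∃ m₀ : ℕ, ∀ m ≥ m₀, dist (x m) y ≤ setDist A B + ε) →
    ∃ z, Tendsto x atTop (nhds z)

/-- `T` is a cyclic contraction on `A ∪ B`. -/
def CyclicContraction {X : Type*} [MetricSpace X] (A B : Set X) (T : X → X) : Prop :=
  Set.MapsTo T A B ∧ Set.MapsTo T B A ∧ ∃ k : ℝ, 0 < k ∧ k < 1 ∧
    ∀ x ∈ A, ∀ y ∈ B, dist (T x) (T y) ≤ k * dist x y + (1 - k) * setDist A B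

lemma setDist_le' {X : Type*} [PseudoMetricSpace X] {A B : Set X} {x y : X}
    (hx : x ∈ A) (hy : y ∈ B) : setDist A B ≤ dist x y :=
  csInf_le ⟨0, by rintro r ⟨a, _, b, _, rfl⟩; exact dist_nonneg⟩
    (Set.mem_image2_of_mem hx hy)

lemma setDist_nonneg' {X : Type*} [PseudoMetricSpace X] (A B : Set X) : 0 ≤ setDist A B :=
  Real.sInf_nonneg (by rintro r ⟨a, _, b, _, rfl⟩; exact dist_nonneg)

/-- If two points of `A` are both at distance ≤ setDist from a point of `B`,
then by WUC they coincide. -/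
lemma alt_eq {X : Type*} [MetricSpace X] {A B : Set X} (hWUC : PropWUC A B)
    {a b y : X} (ha : a ∈ A) (hb : b ∈ A) (hy : y ∈ B)
    (h1 : dist a y ≤ setDist A B) (h2 : dist b y ≤ setDist A B) : a = b := by
  obtain ⟨L, hL⟩ := hWUC (fun m => if Even m then a else b)
    (fun n => by split <;> assumption)
    (by
      intro ε hε
      refine ⟨y, hy, 0, fun m _ => ?_⟩
      split <;> linarith)
  have h2n : Tendsto (fun n : ℕ => 2 * n) atTop atTop :=
    (strictMono_nat_of_lt_succ (by omega)).tendsto_atTop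
  have h2n1 : Tendsto (fun n : ℕ => 2 * n + 1) atTop atTop :=
    (strictMono_nat_of_lt_succ (by omega)).tendsto_atTop
  have hea : Tendsto (fun n : ℕ => if Even (2 * n) then a else b) atTop (nhds L) :=
    hL.comp h2n
  have heb : Tendsto (fun n : ℕ => if Even (2 * n + 1) then a else b) atTop (nhds L) :=
    hL.comp h2n1
  have e1 : (fun n : ℕ => if Even (2 * n) then a else b) = fun _ => a := by
    funext n; simp [Nat.even_add_one, parity_simps]
  have e2 : (fun n : ℕ => if Even (2 * n + 1) then a else b) = fun _ => b := by
    funext n; simp [Nat.even_add_one, parity_simps]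
  rw [e1] at hea
  rw [e2] at heb
  have hal : a = L := tendsto_nhds_unique tendsto_const_nhds hea
  have hbl : b = L := tendsto_nhds_unique tendsto_const_nhds heb
  rw [hal, hbl]

theorem best_proximity_of_prop_WUC {X : Type*} [MetricSpace X] (A B : Set X)
    (hA : A.Nonempty) (hB : B.Nonempty) (hWUC : PropWUC A B)
    (hAcomplete : IsComplete A) (T : X → X) (hT : CyclicContraction A B T) :
    ∃ z ∈ A, dist z (T z) = setDist A B ∧
      (∀ z' ∈ A, dist z' (T z') = setDist A B → z' = z) ∧
      ∀ x ∈ A, Tendsto (fun n => T^[2 * n] x) atTop (nhds z) := by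
  obtain ⟨hTA, hTB, k, hk0, hk1, hC⟩ := hT
  set d := setDist A B with hdd
  have hd0 : 0 ≤ d := setDist_nonneg' A B
  have hmem : ∀ x ∈ A, ∀ n : ℕ, T^[2*n] x ∈ A ∧ T^[2*n+1] x ∈ B := by
    intro x hx n
    induction n with
    | zero => simpa using ⟨hx, hTA hx⟩
    | succ n ih =>
      have h1 : T^[2*n+1+1] x ∈ A := by
        rw [Function.iterate_succ_apply']
        exact hTB ih.2
      rw [show 2*(n+1) = 2*n+1+1 by omega]
      refine ⟨h1, ?_⟩
      rw [Function.iterate_succ_apply']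
      exact hTA h1
  have hC' : ∀ a b, (a ∈ A ∧ b ∈ B) ∨ (a ∈ B ∧ b ∈ A) →
      dist (T a) (T b) ≤ k * dist a b + (1-k) * d := by
    rintro a b (⟨ha, hb⟩ | ⟨ha, hb⟩)
    · exact hC a ha b hb
    · rw [dist_comm (T a), dist_comm a]
      exact hC b hb a ha
  have peel : ∀ p : ℕ, ∀ a b, ((a ∈ A ∧ b ∈ B) ∨ (a ∈ B ∧ b ∈ A)) →
      dist (T^[p] a) (T^[p] b) ≤ k^p * dist a b + (1 - k^p) * d := by
    intro p
    induction p with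
    | zero => intro a b _; simp
    | succ p ih =>
      intro a b hab
      have hab' : (T a ∈ A ∧ T b ∈ B) ∨ (T a ∈ B ∧ T b ∈ A) := by
        rcases hab with ⟨ha, hb⟩ | ⟨ha, hb⟩
        · exact Or.inr ⟨hTA ha, hTB hb⟩
        · exact Or.inl ⟨hTB ha, hTA hb⟩
      have hkp : (0:ℝ) ≤ k^p := pow_nonneg hk0.le p
      calc dist (T^[p+1] a) (T^[p+1] b) = dist (T^[p] (T a)) (T^[p] (T b)) := by
            rw [Function.iterate_succ_apply, Function.iterate_succ_apply]
        _ ≤ k^p * dist (T a) (T b) + (1 - k^p) * d := ih _ _ hab'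
        _ ≤ k^p * (k * dist a b + (1-k)*d) + (1 - k^p) * d := by
            nlinarith [hC' a b hab]
        _ = k^(p+1) * dist a b + (1 - k^(p+1)) * d := by ring
  have h2n1 : Tendsto (fun n : ℕ => 2 * n + 1) atTop atTop :=
    (strictMono_nat_of_lt_succ (by omega)).tendsto_atTop
  -- main construction for a fixed starting point
  have bpp : ∀ x ∈ A, ∃ z ∈ A, dist z (T z) = d ∧
      Tendsto (fun n => T^[2*n] x) atTop (nhds z) := by
    intro x hx
    set C : ℝ := k * dist (T x) x + (1-k)*d + dist (T x) x + dist (T^[2] x) x with hCdef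
    have hC0 : 0 ≤ C := by
      have h1 := dist_nonneg (x := T x) (y := x)
      have h2 := dist_nonneg (x := T^[2] x) (y := x)
      nlinarith
    set D : ℝ := C / (1-k) with hDdef
    have hD0 : 0 ≤ D := div_nonneg hC0 (by linarith)
    have hDC : (1-k) * D = C := by
      rw [hDdef]; field_simp
      exact mul_div_cancel_left₀ C (by linarith)
    have hDle : k * D + C = D := by nlinarith [hDC]
    have hNbound : ∀ j : ℕ, dist (T^[j] x) x ≤ D := by
      intro j
      induction j with
      | zero => simpa using hD0
      | succ j ih =>
        rcases Nat.even_or_odd j with hj | hj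
        · obtain ⟨i, hi⟩ := hj
          have hjA : T^[j] x ∈ A := by
            have := (hmem x hx i).1
            rwa [show 2*i = j by omega] at this
          have step : dist (T^[j+1] x) (T^[2] x) ≤ k * dist (T^[j] x) (T x) + (1-k)*d := by
            have h := hC' (T^[j] x) (T x) (Or.inl ⟨hjA, hTA hx⟩)
            rwa [← Function.iterate_succ_apply' T j x,
              show T (T x) = T^[2] x by simp [Function.iterate_succ_apply']] at h
          have tri1 : dist (T^[j] x) (T x) ≤ dist (T^[j] x) x + dist (T x) x := by
            rw [dist_comm (T x) x]; exact dist_triangle _ _ _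
          have tri2 : dist (T^[j+1] x) x ≤ dist (T^[j+1] x) (T^[2] x) + dist (T^[2] x) x :=
            dist_triangle _ _ _
          have h4 : k * dist (T^[j] x) (T x) ≤ k * (D + dist (T x) x) :=
            mul_le_mul_of_nonneg_left (by linarith) hk0.le
          nlinarith [hk0.le, ih, hDle, h4, step, tri2, hCdef,
            dist_nonneg (x := T x) (y := x), dist_nonneg (x := T^[2] x) (y := x)]
        · obtain ⟨i, hi⟩ := hj
          have hjB : T^[j] x ∈ B := by
            have := (hmem x hx i).2
            rwa [show 2*i+1 = j by omega] at this
          have step : dist (T^[j+1] x) (T x) ≤ k * dist (T^[j] x) x + (1-k)*d := by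
            have h := hC' (T^[j] x) x (Or.inr ⟨hjB, hx⟩)
            rwa [← Function.iterate_succ_apply' T j x] at h
          have tri2 : dist (T^[j+1] x) x ≤ dist (T^[j+1] x) (T x) + dist (T x) x :=
            dist_triangle _ _ _
          have hd1 := dist_nonneg (x := T x) (y := x)
          have hd2 := dist_nonneg (x := T^[2] x) (y := x)
          nlinarith [hk0.le, ih, hDle]
    have hcons : ∀ n : ℕ, dist (T^[n] x) (T^[n+1] x) ≤ k^n * dist x (T x) + d := by
      intro n
      have h := peel n x (T x) (Or.inl ⟨hx, hTA hx⟩)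
      rw [← Function.iterate_succ_apply T n x] at h
      have hkn : (0:ℝ) ≤ k^n := pow_nonneg hk0.le n
      nlinarith
    have hwuc : ∀ ε > (0:ℝ), ∃ y ∈ B, ∃ m₀ : ℕ, ∀ m ≥ m₀, dist (T^[2*m] x) y ≤ d + ε := by
      intro ε hε
      have hdxT : (0:ℝ) ≤ D + dist x (T x) := by positivity
      have htend : Tendsto (fun n : ℕ => k^n * (D + dist x (T x))) atTop (nhds 0) := by
        simpa using (tendsto_pow_atTop_nhds_zero_of_lt_one hk0.le hk1).mul_const (D + dist x (T x))
      obtain ⟨n₀, hn₀⟩ := (htend.eventually (gt_mem_nhds hε)).exists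
      refine ⟨T^[2*n₀+1] x, (hmem x hx n₀).2, n₀, fun m hm => ?_⟩
      have key := peel (2*n₀) (T^[2*(m-n₀)] x) (T x) (Or.inl ⟨(hmem x hx (m-n₀)).1, hTA hx⟩)
      rw [← Function.iterate_add_apply, ← Function.iterate_succ_apply,
        show 2*n₀ + 2*(m-n₀) = 2*m by omega] at key
      have tri : dist (T^[2*(m-n₀)] x) (T x) ≤ D + dist x (T x) := by
        calc dist (T^[2*(m-n₀)] x) (T x) ≤ dist (T^[2*(m-n₀)] x) x + dist x (T x) :=
              dist_triangle _ _ _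
          _ ≤ D + dist x (T x) := by linarith [hNbound (2*(m-n₀))]
      have hpow : k^(2*n₀) ≤ k^n₀ :=
        pow_le_pow_of_le_one hk0.le hk1.le (by omega)
      have hkn : (0:ℝ) ≤ k^(2*n₀) := pow_nonneg hk0.le _
      have h1 : k^(2*n₀) * dist (T^[2*(m-n₀)] x) (T x) ≤ k^n₀ * (D + dist x (T x)) := by
        calc k^(2*n₀) * dist (T^[2*(m-n₀)] x) (T x) ≤ k^(2*n₀) * (D + dist x (T x)) := by
              exact mul_le_mul_of_nonneg_left tri hkn
          _ ≤ k^n₀ * (D + dist x (T x)) := mul_le_mul_of_nonneg_right hpow hdxT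
      nlinarith
    obtain ⟨z, hz⟩ := hWUC (fun n => T^[2*n] x) (fun n => (hmem x hx n).1) hwuc
    have hzA : z ∈ A := hAcomplete.isClosed.mem_of_tendsto hz
      (Filter.Eventually.of_forall fun n => (hmem x hx n).1)
    have hge : d ≤ dist z (T z) := setDist_le' hzA (hTA hzA)
    have hzs : Tendsto (fun n => T^[2*(n+1)] x) atTop (nhds z) := by
      have := hz.comp (tendsto_add_atTop_nat 1)
      exact this
    have hd1 : Tendsto (fun n => dist z (T^[2*(n+1)] x)) atTop (nhds 0) := by
      have h := (tendsto_const_nhds : Tendsto (fun _ : ℕ => z) atTop (nhds z)).dist hzs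
      simpa using h
    have hd2 : Tendsto (fun n => dist (T^[2*(n+1)] x) z) atTop (nhds 0) := by
      have h := hzs.dist (tendsto_const_nhds : Tendsto (fun _ : ℕ => z) atTop (nhds z))
      simpa using h
    have hcn : Tendsto (fun n => dist (T^[2*n+1] x) (T^[2*(n+1)] x)) atTop (nhds d) := by
      have hupper : Tendsto (fun n : ℕ => k^(2*n+1) * dist x (T x) + d) atTop (nhds d) := by
        have : Tendsto (fun n : ℕ => k^(2*n+1)) atTop (nhds 0) :=
          (tendsto_pow_atTop_nhds_zero_of_lt_one hk0.le hk1).comp h2n1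
        simpa using (this.mul_const (dist x (T x))).add_const d
      refine tendsto_of_tendsto_of_tendsto_of_le_of_le tendsto_const_nhds hupper
        (fun n => ?_) (fun n => ?_)
      · rw [dist_comm]
        exact setDist_le' ((hmem x hx (n+1)).1) ((hmem x hx n).2)
      · have := hcons (2*n+1)
        rwa [show 2*n+1+1 = 2*(n+1) by omega] at this
    have keyle : ∀ n, dist z (T z) ≤ dist z (T^[2*(n+1)] x) +
        (k * (dist (T^[2*n+1] x) (T^[2*(n+1)] x) + dist (T^[2*(n+1)] x) z) + (1-k)*d) := by
      intro n
      have h1 : dist (T^[2*(n+1)] x) (T z) ≤ k * dist (T^[2*n+1] x) z + (1-k)*d := by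
        have h := hC' z (T^[2*n+1] x) (Or.inl ⟨hzA, (hmem x hx n).2⟩)
        calc dist (T^[2*(n+1)] x) (T z) = dist (T z) (T (T^[2*n+1] x)) := by
              rw [dist_comm, show (2*(n+1)) = 2*n+1+1 by omega, Function.iterate_succ_apply']
          _ ≤ k * dist z (T^[2*n+1] x) + (1-k)*d := h
          _ = k * dist (T^[2*n+1] x) z + (1-k)*d := by rw [dist_comm]
      have h2 : dist (T^[2*n+1] x) z ≤ dist (T^[2*n+1] x) (T^[2*(n+1)] x) +
          dist (T^[2*(n+1)] x) z := dist_triangle _ _ _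
      have h3 : dist z (T z) ≤ dist z (T^[2*(n+1)] x) + dist (T^[2*(n+1)] x) (T z) :=
        dist_triangle _ _ _
      nlinarith [hk0.le]
    have hlim : Tendsto (fun n => dist z (T^[2*(n+1)] x) +
        (k * (dist (T^[2*n+1] x) (T^[2*(n+1)] x) + dist (T^[2*(n+1)] x) z) + (1-k)*d))
        atTop (nhds (0 + (k * (d + 0) + (1-k)*d))) :=
      hd1.add (((hcn.add hd2).const_mul k).add_const _)
    have hle : dist z (T z) ≤ 0 + (k * (d + 0) + (1-k)*d) := ge_of_tendsto' hlim keyle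
    have : dist z (T z) = d := le_antisymm (by nlinarith) hge
    exact ⟨z, hzA, this, hz⟩
  -- T∘T fixes best proximity points
  have invol : ∀ w ∈ A, dist w (T w) = d → T (T w) = w := by
    intro w hw hwd
    refine alt_eq hWUC (hTB (hTA hw)) hw (hTA hw) ?_ hwd.le
    have h := hC w hw (T w) (hTA hw)
    rw [hwd] at h
    rw [dist_comm]
    calc dist (T w) (T (T w)) ≤ k*d + (1-k)*d := h
      _ = d := by ring
  -- uniqueness
  have uniq : ∀ z₁ ∈ A, dist z₁ (T z₁) = d → ∀ z₂ ∈ A, dist z₂ (T z₂) = d → z₁ = z₂ := by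
    intro z₁ h₁A h₁ z₂ h₂A h₂
    have i₁ := invol z₁ h₁A h₁
    have i₂ := invol z₂ h₂A h₂
    have ha : dist z₁ (T z₂) ≤ k * dist z₂ (T z₁) + (1-k)*d := by
      have h := hC z₂ h₂A (T z₁) (hTA h₁A)
      rw [i₁] at h
      rwa [dist_comm z₁ (T z₂)]
    have hb : dist z₂ (T z₁) ≤ k * dist z₁ (T z₂) + (1-k)*d := by
      have h := hC z₁ h₁A (T z₂) (hTA h₂A)
      rw [i₂] at h
      rwa [dist_comm z₂ (T z₁)]
    have had : d ≤ dist z₁ (T z₂) := setDist_le' h₁A (hTA h₂A)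
    have hbd : d ≤ dist z₂ (T z₁) := setDist_le' h₂A (hTA h₁A)
    have hsum : (1-k) * (dist z₁ (T z₂) + dist z₂ (T z₁)) ≤ (1-k) * (2*d) := by nlinarith
    have hsum' : dist z₁ (T z₂) + dist z₂ (T z₁) ≤ 2*d :=
      le_of_mul_le_mul_left hsum (by linarith : (0:ℝ) < 1-k)
    exact alt_eq hWUC h₁A h₂A (hTA h₁A) h₁.le (by linarith)
  obtain ⟨x₀, hx₀⟩ := hA
  obtain ⟨z, hzA, hzd, hztend⟩ := bpp x₀ hx₀
  refine ⟨z, hzA, hzd, fun z' hz'A hz'd => uniq z' hz'A hz'd z hzA hzd, fun x hxA => ?_⟩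
  obtain ⟨w, hwA, hwd, hwt⟩ := bpp x hxA
  rwa [uniq w hwA hwd z hzA hzd] at hwt
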